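/- Let N(a) be a Poisson random variable with mean a > 0. Then E[(a - N(a))^+] / √a → 1/√(2π) as a → ∞. -/

import Mathlib

open Real Filter

lemma poisson_telescope (a : ℝ) (m : ℕ) :
    ∑ n ∈ Finset.range (m+1), Real.exp (-a) * a ^ n / (Nat.factorial n) * (a - n)
      = Real.exp (-a) * a ^ (m+1) / (Nat.factorial m) := by
  induction m with
  | zero => simp
  | succ k ih =>
    rw [Finset.sum_range_succ, ih]
    have h1 : (Nat.factorial k : ℝ) ≠ 0 := by positivity
    have h2 : (Nat.factorial (k+1) : ℝ) ≠ 0 := by positivity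
    rw [Nat.factorial_succ]
    push_cast
    field_simp
    ring

/-- `E[(a - N(a))⁺]` for `N(a)` Poisson with mean `a`. -/
noncomputable def poissonShortfall (a : ℝ) : ℝ :=
  ∑' n : ℕ, (Real.exp (-a) * a ^ n / (Nat.factorial n)) * max (a - n) 0

lemma poissonShortfall_closed_form {a : ℝ} (ha : 0 ≤ a) :
    poissonShortfall a = Real.exp (-a) * a ^ (⌊a⌋₊ + 1) / (Nat.factorial ⌊a⌋₊) := by
  set m := ⌊a⌋₊ with hm
  rw [poissonShortfall,
    tsum_eq_sum (s := Finset.range (m+1)) (by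
      intro n hn
      have hn' : m + 1 ≤ n := by simpa using hn
      have : a - n ≤ 0 := by
        have : a < m + 1 := Nat.lt_floor_add_one a
        have hle : ((m:ℝ) + 1) ≤ n := by exact_mod_cast hn'
        linarith
      rw [max_eq_right this, mul_zero])]
  rw [← poisson_telescope a m]
  refine Finset.sum_congr rfl fun n hn => ?_
  have hn' : n ≤ m := Nat.lt_succ_iff.mp (Finset.mem_range.mp hn)
  have : (n:ℝ) ≤ a := le_trans (by exact_mod_cast hn') (Nat.floor_le ha)
  rw [max_eq_left (by linarith)]

lemma poisson_eq_form {a : ℝ} (ha : 1 ≤ a) :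
    Real.exp (-a) * a ^ (⌊a⌋₊ + 1) / (Nat.factorial ⌊a⌋₊) / Real.sqrt a
      = Real.exp ((⌊a⌋₊ : ℝ) * Real.log (a / ⌊a⌋₊) + ⌊a⌋₊ - a)
        * Real.sqrt (a / (2 * ⌊a⌋₊)) / Stirling.stirlingSeq ⌊a⌋₊ := by
  have ha0 : (0:ℝ) < a := lt_of_lt_of_le one_pos ha
  set m := ⌊a⌋₊ with hm
  have hm1 : 1 ≤ m := Nat.le_floor (by exact_mod_cast ha)
  have hmpos : (0:ℝ) < m := by exact_mod_cast hm1
  have hfac : (0:ℝ) < Nat.factorial m := by positivity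
  have hsq : Real.sqrt a > 0 := Real.sqrt_pos.mpr ha0
  have h2m : (0:ℝ) < 2 * m := by positivity
  have hexp : Real.exp ((m:ℝ) * Real.log (a / m) + m - a)
      = (a / m) ^ m * Real.exp m * Real.exp (-a) := by
    rw [show (m:ℝ) * Real.log (a / m) + m - a = (m:ℝ) * Real.log (a / m) + m + (-a) by ring,
      Real.exp_add, Real.exp_add, Real.exp_nat_mul, Real.exp_log (by positivity)]
  have hem : Real.exp (m:ℝ) = Real.exp 1 ^ m := by rw [← Real.exp_nat_mul, mul_one]
  rw [hexp, hem, Stirling.stirlingSeq, Real.sqrt_div ha0.le,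
    div_pow, div_pow, pow_succ, show a = Real.sqrt a * Real.sqrt a from (Real.mul_self_sqrt ha0.le).symm]
  have hs2m : Real.sqrt (2 * m) ≠ 0 := ne_of_gt (Real.sqrt_pos.mpr h2m)
  have he1 : Real.exp 1 ^ m ≠ 0 := by positivity
  field_simp
  ring_nf
  rw [Real.sq_sqrt ha0.le]
  rw [Real.sq_sqrt ha0.le]

lemma poisson_F_tendsto :
    Tendsto (fun a : ℝ => (⌊a⌋₊:ℝ) * Real.log (a / ⌊a⌋₊) + ⌊a⌋₊ - a) atTop (nhds 0) := by
  apply tendsto_of_tendsto_of_tendsto_of_le_of_le'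
    (g := fun a : ℝ => -(1/a)) (h := fun _ => (0:ℝ))
  · simpa [one_div] using (tendsto_inv_atTop_zero (𝕜 := ℝ)).neg
  · exact tendsto_const_nhds
  · filter_upwards [eventually_ge_atTop (1:ℝ)] with a ha
    have ha0 : (0:ℝ) < a := lt_of_lt_of_le one_pos ha
    set m := ⌊a⌋₊ with hmdef
    have hm1 : 1 ≤ m := Nat.le_floor (by exact_mod_cast ha)
    have hmpos : (0:ℝ) < m := by exact_mod_cast hm1
    have hma : (m:ℝ) ≤ a := Nat.floor_le ha0.le
    have ham : a < m + 1 := Nat.lt_floor_add_one a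
    have hlog : 1 - (m:ℝ)/a ≤ Real.log (a / m) := by
      have := Real.log_le_sub_one_of_pos (show (0:ℝ) < m/a by positivity)
      have h2 : Real.log ((m:ℝ)/a) = -Real.log (a/m) := by
        rw [← Real.log_inv, inv_div]
      linarith
    have key : (m:ℝ) - (m:ℝ)^2/a ≤ (m:ℝ) * Real.log (a/m) := by
      have := mul_le_mul_of_nonneg_left hlog hmpos.le
      have hrw : (m:ℝ) * (1 - m/a) = m - m^2/a := by field_simp
      linarith [hrw ▸ this]
    have hsq : ((a:ℝ) - m)^2 ≤ 1 := by nlinarith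
    have hcmp : ((a:ℝ) - m)^2/a ≤ 1/a := by gcongr
    have heq : -((a - (m:ℝ))^2/a) = 2*m - (m:ℝ)^2/a - a := by field_simp; ring
    linarith [key, hcmp, heq]
  · filter_upwards [eventually_ge_atTop (1:ℝ)] with a ha
    have ha0 : (0:ℝ) < a := lt_of_lt_of_le one_pos ha
    set m := ⌊a⌋₊ with hmdef
    have hm1 : 1 ≤ m := Nat.le_floor (by exact_mod_cast ha)
    have hmpos : (0:ℝ) < m := by exact_mod_cast hm1
    have hlog : Real.log (a/m) ≤ a/m - 1 := Real.log_le_sub_one_of_pos (by positivity)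
    have := mul_le_mul_of_nonneg_left hlog hmpos.le
    have hrw : (m:ℝ) * (a/m - 1) = a - m := by field_simp
    linarith [hrw ▸ this]

/-- `E[(a - N(a))⁺] ∼ √(a/(2π))` as `a → ∞`. -/
theorem poisson_shortfall_asymptotic :
    Tendsto (fun a : ℝ => poissonShortfall a / Real.sqrt a) atTop
      (nhds (1 / Real.sqrt (2 * Real.pi))) := by
  have hS : Tendsto (fun a : ℝ => Stirling.stirlingSeq ⌊a⌋₊) atTop (nhds (Real.sqrt π)) :=
    Stirling.tendsto_stirlingSeq_sqrt_pi.comp tendsto_nat_floor_atTop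
  have hdiv : Tendsto (fun a : ℝ => a / (2 * ⌊a⌋₊)) atTop (nhds (1/2)) := by
    have h1 : Tendsto (fun a : ℝ => (⌊a⌋₊:ℝ)/a * 2) atTop (nhds 2) := by
      simpa using tendsto_nat_floor_div_atTop.mul_const (2:ℝ)
    have h2 := h1.inv₀ two_ne_zero
    rw [show (1:ℝ)/2 = (2:ℝ)⁻¹ by norm_num]
    apply h2.congr'
    filter_upwards [eventually_ge_atTop (1:ℝ)] with a ha
    have ha0 : (0:ℝ) < a := lt_of_lt_of_le one_pos ha
    have hm1 : 1 ≤ ⌊a⌋₊ := Nat.le_floor (by exact_mod_cast ha)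
    have hmpos : (0:ℝ) < ⌊a⌋₊ := by exact_mod_cast hm1
    rw [mul_inv, inv_div]
    rw [div_mul_eq_div_div_swap, div_div, mul_comm]
    rw [inv_mul_eq_div, div_div, mul_comm]
  have hsqrt : Tendsto (fun a : ℝ => Real.sqrt (a/(2*⌊a⌋₊))) atTop
      (nhds (Real.sqrt (1/2))) := (Real.continuous_sqrt.tendsto _).comp hdiv
  have hexpF : Tendsto (fun a : ℝ =>
      Real.exp ((⌊a⌋₊:ℝ) * Real.log (a/⌊a⌋₊) + ⌊a⌋₊ - a)) atTop (nhds 1) := by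
    simpa [Function.comp_def] using (Real.continuous_exp.tendsto 0).comp poisson_F_tendsto
  have hπ : Real.sqrt π ≠ 0 := by positivity
  have hmain := (hexpF.mul hsqrt).div hS hπ
  have hval : 1 * Real.sqrt (1/2) / Real.sqrt π = 1 / Real.sqrt (2*π) := by
    rw [one_mul, Real.sqrt_mul (by norm_num : (0:ℝ) ≤ 2),
      show (1:ℝ)/2 = (2:ℝ)⁻¹ by norm_num, Real.sqrt_inv]
    have h2 : Real.sqrt 2 ≠ 0 := by positivity
    field_simp
  rw [← hval]
  apply hmain.congr'
  filter_upwards [eventually_ge_atTop (1:ℝ)] with a ha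
  simp only [Pi.div_apply]
  rw [poissonShortfall_closed_form (le_trans zero_le_one ha), poisson_eq_form ha]
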